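/- In the duplicated gadget construction with ℓ copies x_1, …, x_ℓ of the vertex x, any feasible edge set (one in which every ordered pair (p,q) has a q–p path all of whose vertices lie in the iBGP safe set S(p,q)) has at least ℓ · h* edges, where h* is the minimum size of a hitting set for the instance T_1, …, T_m ⊆ [n]. -/

import Mathlib

/-- The vertices of the duplicated hitting-set gadget: `ℓ` copies `x k` of the
vertex `x`, dummy nodes `z`, `y`, `u`, `h`, element nodes `a i` for `i ∈ [n]`
and set nodes `b j` for `j ∈ [m]`. -/
inductive GV (L n m : ℕ) : Type
  | x : Fin L → GV L n m
  | z : GV L n m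
  | y : GV L n m
  | u : GV L n m
  | h : GV L n m
  | a : Fin n → GV L n m
  | b : Fin m → GV L n m
deriving DecidableEq

/-- `d` is a pseudometric (reflexive, symmetric, triangle inequality). -/
def IsPseudoMetric {α : Type*} (d : α → α → ℝ) : Prop :=
  (∀ p, d p p = 0) ∧ (∀ p q, d p q = d q p) ∧ (∀ p q r, d p r ≤ d p q + d q r)

/-- `d` is bounded above by the prescribed edge weights of the duplicated gadget
(indices are 1-based, via `·.val + 1`). -/
def GadgetEdgeBounds {L n m : ℕ} (T : Fin m → Finset (Fin n)) (ε : ℝ)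
    (d : GV L n m → GV L n m → ℝ) : Prop :=
  (∀ k : Fin L, d (GV.x k) GV.z ≤ 20 + (k.val + 1) * ε) ∧
  (∀ k : Fin L, ∀ j : Fin m,
    d (GV.x k) (GV.b j) ≤ 20 + 1.4 + ((k.val + 1) + (j.val + 1)) * ε) ∧
  d GV.z GV.y ≤ 1.5 ∧
  (∀ i : Fin n, d GV.z (GV.a i) ≤ 1 + (i.val + 1) * ε) ∧
  d GV.z GV.u ≤ 2 ∧
  (∀ i : Fin n, d (GV.a i) GV.u ≤ 1.1) ∧
  (∀ i : Fin n, ∀ j : Fin m, i ∈ T j →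
    d (GV.a i) (GV.b j) ≤ 1 + ((i.val + 1) + (j.val + 1)) * ε) ∧
  (∀ j : Fin m, d (GV.b j) GV.h ≤ 1 + (j.val + 1) * ε)

/-- `d` is the shortest-path metric of the duplicated gadget graph: it is the
pointwise greatest pseudometric bounded above by the gadget edge weights. -/
def IsGadgetSPMetric {L n m : ℕ} (T : Fin m → Finset (Fin n)) (ε : ℝ)
    (d : GV L n m → GV L n m → ℝ) : Prop :=
  IsPseudoMetric d ∧ GadgetEdgeBounds T ε d ∧
  ∀ d' : GV L n m → GV L n m → ℝ, IsPseudoMetric d' → GadgetEdgeBounds T ε d' →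
    ∀ p q, d' p q ≤ d p q

/-- The iBGP safe set of the ordered pair `(p,q)` for the metric `d`. -/
def iBGPSafeSet {α : Type*} (d : α → α → ℝ) (p q : α) : Set α :=
  {w | ∀ r, d p q < d p r → d w q < d w r} ∪ {q}

/-- `E` is a correct iBGP signaling graph: every ordered pair `(p,q)` has a
path from `q` to `p` all of whose vertices lie in the safe set `S(p,q)`. -/
def iBGPFeasible {α : Type*} (d : α → α → ℝ) (E : Set (Sym2 α)) : Prop :=
  ∀ p q : α, ∃ w : (SimpleGraph.fromEdgeSet E).Walk q p,
    ∀ v ∈ w.support, v ∈ iBGPSafeSet d p q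

/-- `Hs` is a hitting set for the instance `T`. -/
def IsHittingSet {n m : ℕ} (T : Fin m → Finset (Fin n)) (Hs : Finset (Fin n)) : Prop :=
  ∀ j : Fin m, ∃ i ∈ Hs, i ∈ T j

/- ## Auxiliary machinery -/

section Aux

variable {L n m : ℕ} {T : Fin m → Finset (Fin n)} {ε : ℝ}
  {d : GV L n m → GV L n m → ℝ}

/-- Any `1`-Lipschitz-type potential gives a lower bound for the shortest-path
metric. -/
lemma pot_le (hd : IsGadgetSPMetric T ε d) (f : GV L n m → ℝ)
    (hf : GadgetEdgeBounds T ε fun p q => |f p - f q|) (p q : GV L n m) :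
    |f p - f q| ≤ d p q := by
  refine hd.2.2 (fun p q => |f p - f q|) ⟨fun v => by simp, fun v w => abs_sub_comm _ _,
    fun v w r => abs_sub_le _ _ _⟩ hf p q

/-- Potential witnessing `d (x k) u ≥ 22`. -/
def pf1 (L n m : ℕ) : GV L n m → ℝ
  | .x _ => 22 | .z => 2 | .y => 2 | .u => 0 | .h => 2 | .a _ => 1.1 | .b _ => 2

/-- Potential witnessing `d (x k) h ≥ 22.4`. -/
def pf2 (L n m : ℕ) : GV L n m → ℝ
  | .x _ => 22.4 | .z => 3 | .y => 3 | .u => 3 | .h => 0 | .a _ => 2 | .b _ => 1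

/-- Potential witnessing `d z (b j) ≥ 2`. -/
def pf3 (L n m : ℕ) : GV L n m → ℝ
  | .x _ => 20 | .z => 0 | .y => 1.5 | .u => 2 | .h => 2 | .a _ => 1 | .b _ => 2

/-- Potential witnessing `d y (b j) ≥ 3.5`. -/
def pf4 (L n m : ℕ) : GV L n m → ℝ
  | .x _ => 21.5 | .z => 1.5 | .y => 0 | .u => 3.5 | .h => 3.5 | .a _ => 2.5 | .b _ => 3.5

/-- Potential witnessing `d (x k) (x k') ≥ 40` for `k' ≠ k`. -/
def pf5 (L n m : ℕ) (k : Fin L) : GV L n m → ℝ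
  | .x k' => if k' = k then 0 else 40
  | .z => 20 | .y => 21.5 | .u => 22 | .h => 22.4 | .a _ => 21 | .b _ => 21.4

/-- Potential witnessing `d (a i) (b j) ≥ 1.1` when `i ∉ T j`. -/
def pf6 (L n m : ℕ) (i : Fin n) (j : Fin m) : GV L n m → ℝ
  | .x _ => 21 | .z => 1 | .y => 1 | .u => 1.1 | .h => 1.05
  | .a i' => if i' = i then 0 else 1
  | .b j' => if j' = j then 1.1 else 1

/-- Potential witnessing `d (b j'') (b j) ≥ 2` for `j'' ≠ j`. -/
def pf7 (L n m : ℕ) (j : Fin m) : GV L n m → ℝ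
  | .x _ => 21 | .z => 1 | .y => 1 | .u => 1 | .h => 1 | .a _ => 1
  | .b j' => if j' = j then 2 else 0

lemma pot_bd {A C t : ℝ} (h : |A| ≤ C) (ht : 0 ≤ t) : |A| ≤ C + t := by linarith

lemma dxu_ge (hd : IsGadgetSPMetric T ε d) (hε : 0 ≤ ε) (k : Fin L) :
    22 ≤ d (GV.x k) GV.u := by
  have h := pot_le hd (pf1 L n m) ?_ (GV.x k) GV.u
  · simp only [pf1] at h
    calc (22:ℝ) = |22 - 0| := by norm_num
    _ ≤ _ := h
  · refine ⟨fun k => pot_bd (by simp only [pf1]; rw [abs_le]; norm_num) (by positivity),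
      fun k j => pot_bd (by simp only [pf1]; rw [abs_le]; norm_num) (by positivity),
      by simp only [pf1]; rw [abs_le]; norm_num,
      fun i => pot_bd (by simp only [pf1]; rw [abs_le]; norm_num) (by positivity),
      by simp only [pf1]; rw [abs_le]; norm_num,
      fun i => by simp only [pf1]; rw [abs_le]; norm_num,
      fun i j _ => pot_bd (by simp only [pf1]; rw [abs_le]; norm_num) (by positivity),
      fun j => pot_bd (by simp only [pf1]; rw [abs_le]; norm_num) (by positivity)⟩

lemma dxh_ge (hd : IsGadgetSPMetric T ε d) (hε : 0 ≤ ε) (k : Fin L) :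
    22.4 ≤ d (GV.x k) GV.h := by
  have h := pot_le hd (pf2 L n m) ?_ (GV.x k) GV.h
  · simp only [pf2] at h
    rw [sub_zero, abs_of_nonneg (by norm_num : (0:ℝ) ≤ 22.4)] at h
    exact h
  · refine ⟨fun k => pot_bd (by simp only [pf2]; rw [abs_le]; norm_num) (by positivity),
      fun k j => pot_bd (by simp only [pf2]; rw [abs_le]; norm_num) (by positivity),
      by simp only [pf2]; rw [abs_le]; norm_num,
      fun i => pot_bd (by simp only [pf2]; rw [abs_le]; norm_num) (by positivity),
      by simp only [pf2]; rw [abs_le]; norm_num,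
      fun i => by simp only [pf2]; rw [abs_le]; norm_num,
      fun i j _ => pot_bd (by simp only [pf2]; rw [abs_le]; norm_num) (by positivity),
      fun j => pot_bd (by simp only [pf2]; rw [abs_le]; norm_num) (by positivity)⟩

lemma dzb_ge (hd : IsGadgetSPMetric T ε d) (hε : 0 ≤ ε) (j : Fin m) :
    2 ≤ d (GV.z (L:=L) (n:=n)) (GV.b j) := by
  have h := pot_le hd (pf3 L n m) ?_ GV.z (GV.b j)
  · simp only [pf3] at h
    calc (2:ℝ) = |0 - 2| := by norm_num
    _ ≤ _ := h
  · refine ⟨fun k => pot_bd (by simp only [pf3]; rw [abs_le]; norm_num) (by positivity),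
      fun k j => pot_bd (by simp only [pf3]; rw [abs_le]; norm_num) (by positivity),
      by simp only [pf3]; rw [abs_le]; norm_num,
      fun i => pot_bd (by simp only [pf3]; rw [abs_le]; norm_num) (by positivity),
      by simp only [pf3]; rw [abs_le]; norm_num,
      fun i => by simp only [pf3]; rw [abs_le]; norm_num,
      fun i j _ => pot_bd (by simp only [pf3]; rw [abs_le]; norm_num) (by positivity),
      fun j => pot_bd (by simp only [pf3]; rw [abs_le]; norm_num) (by positivity)⟩

lemma dyb_ge (hd : IsGadgetSPMetric T ε d) (hε : 0 ≤ ε) (j : Fin m) :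
    3.5 ≤ d (GV.y (L:=L) (n:=n)) (GV.b j) := by
  have h := pot_le hd (pf4 L n m) ?_ GV.y (GV.b j)
  · simp only [pf4] at h
    rw [zero_sub, abs_neg, abs_of_nonneg (by norm_num : (0:ℝ) ≤ 3.5)] at h
    exact h
  · refine ⟨fun k => pot_bd (by simp only [pf4]; rw [abs_le]; norm_num) (by positivity),
      fun k j => pot_bd (by simp only [pf4]; rw [abs_le]; norm_num) (by positivity),
      by simp only [pf4]; rw [abs_le]; norm_num,
      fun i => pot_bd (by simp only [pf4]; rw [abs_le]; norm_num) (by positivity),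
      by simp only [pf4]; rw [abs_le]; norm_num,
      fun i => by simp only [pf4]; rw [abs_le]; norm_num,
      fun i j _ => pot_bd (by simp only [pf4]; rw [abs_le]; norm_num) (by positivity),
      fun j => pot_bd (by simp only [pf4]; rw [abs_le]; norm_num) (by positivity)⟩

lemma dxx_ge (hd : IsGadgetSPMetric T ε d) (hε : 0 ≤ ε) {k k' : Fin L} (hkk' : k' ≠ k) :
    40 ≤ d (GV.x (n:=n) (m:=m) k) (GV.x k') := by
  have h := pot_le hd (pf5 L n m k) ?_ (GV.x k) (GV.x k')
  · simp only [pf5, if_pos rfl, if_neg hkk'] at h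
    calc (40:ℝ) = |0 - 40| := by norm_num
    _ ≤ _ := h
  · refine ⟨fun k => pot_bd (by simp only [pf5]; split_ifs <;> (rw [abs_le]; norm_num))
        (by positivity),
      fun k j => pot_bd (by simp only [pf5]; split_ifs <;> (rw [abs_le]; norm_num))
        (by positivity),
      by simp only [pf5]; rw [abs_le]; norm_num,
      fun i => pot_bd (by simp only [pf5]; rw [abs_le]; norm_num) (by positivity),
      by simp only [pf5]; rw [abs_le]; norm_num,
      fun i => by simp only [pf5]; rw [abs_le]; norm_num,
      fun i j _ => pot_bd (by simp only [pf5]; rw [abs_le]; norm_num) (by positivity),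
      fun j => pot_bd (by simp only [pf5]; rw [abs_le]; norm_num) (by positivity)⟩

lemma dab_ge (hd : IsGadgetSPMetric T ε d) (hε : 0 ≤ ε) {i : Fin n} {j : Fin m}
    (hij : i ∉ T j) : 1.1 ≤ d (GV.a (L:=L) i) (GV.b j) := by
  have h := pot_le hd (pf6 L n m i j) ?_ (GV.a i) (GV.b j)
  · simp only [pf6, if_true] at h
    rw [zero_sub, abs_neg,
      abs_of_nonneg (by norm_num : (0:ℝ) ≤ 1.1)] at h
    exact h
  · refine ⟨fun k => pot_bd (by simp only [pf6]; rw [abs_le]; norm_num) (by positivity),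
      fun k j' => pot_bd (by simp only [pf6]; split_ifs <;> (rw [abs_le]; norm_num))
        (by positivity),
      by simp only [pf6]; rw [abs_le]; norm_num,
      fun i' => pot_bd (by simp only [pf6]; split_ifs <;> (rw [abs_le]; norm_num))
        (by positivity),
      by simp only [pf6]; rw [abs_le]; norm_num,
      fun i' => by simp only [pf6]; split_ifs <;> (rw [abs_le]; norm_num),
      fun i' j' hmem => pot_bd ?_ (by positivity),
      fun j' => pot_bd (by simp only [pf6]; split_ifs <;> (rw [abs_le]; norm_num))
        (by positivity)⟩
    simp only [pf6]
    split_ifs with h1 h2 h2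
    · exact absurd (h1 ▸ h2 ▸ hmem) hij
    · rw [abs_le]; norm_num
    · rw [abs_le]; norm_num
    · rw [abs_le]; norm_num

lemma dbb_ge (hd : IsGadgetSPMetric T ε d) (hε : 0 ≤ ε) {j j' : Fin m} (hjj' : j' ≠ j) :
    2 ≤ d (GV.b (L:=L) (n:=n) j') (GV.b j) := by
  have h := pot_le hd (pf7 L n m j) ?_ (GV.b j') (GV.b j)
  · simp only [pf7, if_pos rfl, if_neg hjj'] at h
    calc (2:ℝ) = |0 - 2| := by norm_num
    _ ≤ _ := h
  · refine ⟨fun k => pot_bd (by simp only [pf7]; rw [abs_le]; norm_num) (by positivity),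
      fun k j' => pot_bd (by simp only [pf7]; split_ifs <;> (rw [abs_le]; norm_num))
        (by positivity),
      by simp only [pf7]; rw [abs_le]; norm_num,
      fun i => pot_bd (by simp only [pf7]; rw [abs_le]; norm_num) (by positivity),
      by simp only [pf7]; rw [abs_le]; norm_num,
      fun i => by simp only [pf7]; rw [abs_le]; norm_num,
      fun i j' _ => pot_bd (by simp only [pf7]; split_ifs <;> (rw [abs_le]; norm_num))
        (by positivity),
      fun j' => pot_bd (by simp only [pf7]; split_ifs <;> (rw [abs_le]; norm_num))
        (by positivity)⟩

lemma exists_last_edge {V : Type*} {G : SimpleGraph V} {q p : V} (w : G.Walk q p)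
    (hqp : q ≠ p) : ∃ v, v ∈ w.support ∧ G.Adj v p := by
  induction w with
  | nil => exact absurd rfl hqp
  | @cons q v p h w' ih =>
    by_cases hvp : v = p
    · subst hvp; exact ⟨q, by simp, h⟩
    · obtain ⟨v', hv', ha⟩ := ih hvp
      exact ⟨v', by simp [hv'], ha⟩


lemma sym2_xa_xa {L n m : ℕ} {k k' : Fin L} {i i' : Fin n}
    (h : s(GV.x (n:=n) (m:=m) k, GV.a i) = s(GV.x k', GV.a i')) : k = k' ∧ i = i' := by
  rw [Sym2.eq_iff] at h
  rcases h with ⟨h1, h2⟩ | ⟨h1, h2⟩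
  · exact ⟨by injection h1, by injection h2⟩
  · exact absurd h1 (by simp)

lemma sym2_xb_xb {L n m : ℕ} {k k' : Fin L} {j j' : Fin m}
    (h : s(GV.x (n:=n) (m:=m) k, GV.b j) = s(GV.x k', GV.b j')) : k = k' ∧ j = j' := by
  rw [Sym2.eq_iff] at h
  rcases h with ⟨h1, h2⟩ | ⟨h1, h2⟩
  · exact ⟨by injection h1, by injection h2⟩
  · exact absurd h1 (by simp)

lemma sym2_xa_ne_xb {L n m : ℕ} {k k' : Fin L} {i : Fin n} {j : Fin m} :
    s(GV.x (n:=n) (m:=m) k, GV.a i) ≠ s(GV.x k', GV.b j) := by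
  rw [Ne, Sym2.eq_iff]
  rintro (⟨h1, h2⟩ | ⟨h1, h2⟩)
  · exact nomatch h2
  · exact nomatch h1

/-- The set of edges of `E` joining `x k` to an `a`- or `b`-vertex. -/
noncomputable def xEdges {L n m : ℕ} (E : Finset (Sym2 (GV L n m))) (k : Fin L) :
    Finset (Sym2 (GV L n m)) := by
  classical
  exact E.filter fun e =>
    (∃ i : Fin n, e = s(GV.x k, GV.a i)) ∨ ∃ j : Fin m, e = s(GV.x k, GV.b j)

lemma mem_xEdges {L n m : ℕ} {E : Finset (Sym2 (GV L n m))} {k : Fin L}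
    {e : Sym2 (GV L n m)} : e ∈ xEdges E k ↔ e ∈ E ∧
      ((∃ i : Fin n, e = s(GV.x k, GV.a i)) ∨ ∃ j : Fin m, e = s(GV.x k, GV.b j)) := by
  classical
  rw [xEdges]
  simp [Finset.mem_filter]

/-- In the duplicated gadget with `ℓ` copies of `x` (with sufficiently small
`ε > 0` and `d` the induced shortest-path metric), any feasible iBGP edge set
has at least `ℓ · h*` edges, where `h*` is the minimum hitting set size. -/
theorem stmt6 (L n m : ℕ) (hL : 1 ≤ L) (T : Fin m → Finset (Fin n))
    (hstar : ℕ)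
    (hstar_ex : ∃ Hs : Finset (Fin n), IsHittingSet T Hs ∧ Hs.card = hstar)
    (hstar_min : ∀ Hs : Finset (Fin n), IsHittingSet T Hs → hstar ≤ Hs.card) :
    ∃ ε₀ : ℝ, 0 < ε₀ ∧ ∀ ε : ℝ, 0 < ε → ε < ε₀ →
      ∀ d : GV L n m → GV L n m → ℝ, IsGadgetSPMetric T ε d →
        ∀ E : Finset (Sym2 (GV L n m)), iBGPFeasible d ↑E →
          L * hstar ≤ E.card := by
  classical
  obtain ⟨Hs0, hHs0, -⟩ := hstar_ex
  have hTne : ∀ j : Fin m, ∃ i, i ∈ T j := fun j => (hHs0 j).imp fun i h => h.2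
  refine ⟨1 / (2 * ((L:ℝ) + m + 1)), by positivity, ?_⟩
  intro ε hε hεlt d hd E hfeas
  have hrefl := hd.1.1
  have hsymm := hd.1.2.1
  have htri := hd.1.2.2
  obtain ⟨hB1, hB2, hB3, hB4, hB5, hB6, hB7, hB8⟩ := hd.2.1
  have hdnn : ∀ p q : GV L n m, 0 ≤ d p q := by
    intro p q
    have h1 := htri p q p
    rw [hrefl p, hsymm q p] at h1
    linarith
  have hA : (0:ℝ) < (L:ℝ) + m + 1 := by positivity
  have hAε : ((L:ℝ) + m + 1) * ε < 1/2 := by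
    have h1 : ((L:ℝ) + m + 1) * ε < ((L:ℝ) + m + 1) * (1 / (2 * ((L:ℝ) + m + 1))) :=
      mul_lt_mul_of_pos_left hεlt hA
    have h2 : ((L:ℝ) + m + 1) * (1 / (2 * ((L:ℝ) + m + 1))) = 1/2 := by
      field_simp
    linarith
  have hkcast : ∀ k : Fin L, ((k.val:ℝ) + 1) ≤ L := by
    intro k; exact_mod_cast Nat.succ_le_of_lt k.isLt
  have hjcast : ∀ j : Fin m, ((j.val:ℝ) + 1) ≤ m := by
    intro j; exact_mod_cast Nat.succ_le_of_lt j.isLt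
  have hkj : ∀ (k : Fin L) (j : Fin m),
      (((k.val:ℝ) + 1) + ((j.val:ℝ) + 1)) * ε < 0.6 := by
    intro k j
    have h1 : (((k.val:ℝ) + 1) + ((j.val:ℝ) + 1)) * ε ≤ ((L:ℝ) + m + 1) * ε := by
      apply mul_le_mul_of_nonneg_right _ hε.le
      have h2 := hkcast k
      have h3 := hjcast j
      linarith
    linarith
  have hj1 : ∀ j : Fin m, ((j.val:ℝ) + 1) * ε ≤ 1 := by
    intro j
    have h1 : ((j.val:ℝ) + 1) * ε ≤ ((L:ℝ) + m + 1) * ε := by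
      apply mul_le_mul_of_nonneg_right _ hε.le
      have h2 := hjcast j
      have h3 : (0:ℝ) ≤ L := by positivity
      linarith
    linarith
  -- the safe set of `(x k, b j)` only contains `x k`, `b j` and `a i` for `i ∈ T j`
  have hsafe : ∀ (k : Fin L) (j : Fin m) (w : GV L n m),
      w ∈ iBGPSafeSet d (GV.x k) (GV.b j) →
      w = GV.x k ∨ w = GV.b j ∨ ∃ i ∈ T j, w = GV.a i := by
    intro k j w hw
    rw [iBGPSafeSet, Set.mem_union, Set.mem_setOf_eq, Set.mem_singleton_iff] at hw
    rcases hw with hw | hw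
    swap
    · exact Or.inr (Or.inl hw)
    have hub := hB2 k j
    have hkj' := hkj k j
    have hdxb : d (GV.x k) (GV.b j) < 22 := by linarith
    have h22 := dxu_ge hd hε.le k
    have h224 := dxh_ge hd hε.le k
    cases w with
    | x k' =>
      by_cases hk' : k' = k
      · subst hk'; exact Or.inl rfl
      · exfalso
        have h40 := dxx_ge hd hε.le hk'
        have hcon := hw (GV.x k') (by linarith)
        rw [hrefl] at hcon
        exact absurd hcon (not_lt.mpr (hdnn _ _))
    | z =>
      exfalso
      have hcon := hw GV.u (by linarith)
      have h2 := dzb_ge hd hε.le j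
      linarith [hB5]
    | y =>
      exfalso
      have hcon := hw GV.u (by linarith)
      have h2 := dyb_ge hd hε.le j
      have hyu : d GV.y GV.u ≤ 3.5 := by
        have h3 := htri GV.y GV.z GV.u
        have h4 := hsymm GV.z GV.y
        linarith [hB3, hB5]
      linarith
    | u =>
      exfalso
      have hcon := hw GV.u (by linarith)
      rw [hrefl] at hcon
      exact absurd hcon (not_lt.mpr (hdnn _ _))
    | h =>
      exfalso
      have hcon := hw GV.h (by linarith)
      rw [hrefl] at hcon
      exact absurd hcon (not_lt.mpr (hdnn _ _))
    | a i =>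
      by_cases hi : i ∈ T j
      · exact Or.inr (Or.inr ⟨i, hi, rfl⟩)
      · exfalso
        have hcon := hw GV.u (by linarith)
        have h2 := dab_ge hd hε.le hi
        linarith [hB6 i]
    | b j' =>
      by_cases hj' : j' = j
      · subst hj'; exact Or.inr (Or.inl rfl)
      · exfalso
        have hcon := hw GV.h (by linarith)
        have h2 := dbb_ge hd hε.le hj'
        have h3 := hB8 j'
        have h4 := hj1 j'
        linarith
  -- feasibility forces, for every `k` and `j`, an edge at `x k` towards `b j` or
  -- some `a i` with `i ∈ T j`
  have hkey : ∀ (k : Fin L) (j : Fin m), ∃ i, i ∈ T j ∧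
      (s(GV.x k, GV.a i) ∈ E ∨ s(GV.x k, GV.b j) ∈ E) := by
    intro k j
    obtain ⟨wk, hwsup⟩ := hfeas (GV.x k) (GV.b j)
    obtain ⟨v, hv, hadj⟩ := exists_last_edge wk (fun hc => nomatch hc)
    rw [SimpleGraph.fromEdgeSet_adj] at hadj
    obtain ⟨hvE, hvne⟩ := hadj
    rcases hsafe k j v (hwsup v hv) with h1 | h1 | ⟨i, hi, h1⟩
    · exact absurd h1 hvne
    · obtain ⟨i, hi⟩ := hTne j
      refine ⟨i, hi, Or.inr ?_⟩
      rw [Sym2.eq_swap]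
      rw [h1] at hvE
      exact_mod_cast hvE
    · refine ⟨i, hi, Or.inl ?_⟩
      rw [Sym2.eq_swap]
      rw [h1] at hvE
      exact_mod_cast hvE
  -- each `x k` is incident to at least `hstar` edges of `E` (towards `a`/`b` nodes)
  have hcard : ∀ k : Fin L, hstar ≤ (xEdges E k).card := by
    intro k
    choose g hg1 hg2 using hkey k
    have hHk : IsHittingSet T (Finset.univ.image g) := fun j =>
      ⟨g j, Finset.mem_image_of_mem g (Finset.mem_univ j), hg1 j⟩
    refine (hstar_min _ hHk).trans ?_
    have hcase : ∀ i : Fin n, (∃ j, g j = i) → s(GV.x k, GV.a i) ∉ E →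
        ∃ j, g j = i ∧ s(GV.x k, GV.b j) ∈ E := by
      intro i hex hna
      obtain ⟨j, hji⟩ := hex
      rcases hg2 j with h | h
      · rw [hji] at h; exact absurd h hna
      · exact ⟨j, hji, h⟩
    refine Finset.card_le_card_of_injOn (fun i =>
      if s(GV.x k, GV.a i) ∈ E then s(GV.x k, GV.a i)
      else if h2 : ∃ j, g j = i ∧ s(GV.x k, GV.b j) ∈ E then s(GV.x k, GV.b h2.choose)
      else s(GV.x k, GV.a i)) ?_ ?_
    · intro i hi
      obtain ⟨j, -, hji⟩ := Finset.mem_image.mp hi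
      by_cases ha : s(GV.x k, GV.a i) ∈ E
      · simp only [if_pos ha]
        exact mem_xEdges.mpr ⟨ha, Or.inl ⟨i, rfl⟩⟩
      · have h2 := hcase i ⟨j, hji⟩ ha
        simp only [if_neg ha, dif_pos h2]
        exact mem_xEdges.mpr ⟨h2.choose_spec.2, Or.inr ⟨h2.choose, rfl⟩⟩
    · intro i hi i' hi' heq
      obtain ⟨j0, -, hj0⟩ := Finset.mem_image.mp (Finset.mem_coe.mp hi)
      obtain ⟨j0', -, hj0'⟩ := Finset.mem_image.mp (Finset.mem_coe.mp hi')
      simp only at heq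
      by_cases ha : s(GV.x k, GV.a i) ∈ E <;>
        by_cases ha' : s(GV.x k, GV.a i') ∈ E
      · rw [if_pos ha, if_pos ha'] at heq
        exact (sym2_xa_xa heq).2
      · have h2' := hcase i' ⟨j0', hj0'⟩ ha'
        rw [if_pos ha, if_neg ha', dif_pos h2'] at heq
        exact absurd heq sym2_xa_ne_xb
      · have h2 := hcase i ⟨j0, hj0⟩ ha
        rw [if_neg ha, dif_pos h2, if_pos ha'] at heq
        exact absurd heq.symm sym2_xa_ne_xb
      · have h2 := hcase i ⟨j0, hj0⟩ ha
        have h2' := hcase i' ⟨j0', hj0'⟩ ha'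
        rw [if_neg ha, dif_pos h2, if_neg ha', dif_pos h2'] at heq
        have hj := (sym2_xb_xb heq).2
        have e1 := h2.choose_spec.1
        have e2 := h2'.choose_spec.1
        rw [← e1, ← e2, hj]
  -- the edge sets at the different copies `x k` are pairwise disjoint
  have hdisj : ∀ k ∈ (Finset.univ : Finset (Fin L)), ∀ k' ∈ Finset.univ, k ≠ k' →
      Disjoint (xEdges E k) (xEdges E k') := by
    intro k _ k' _ hkk'
    rw [Finset.disjoint_left]
    intro e he he'
    have h1 := (mem_xEdges.mp he).2
    have h2 := (mem_xEdges.mp he').2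
    apply hkk'
    rcases h1 with ⟨i, rfl⟩ | ⟨j, rfl⟩ <;> rcases h2 with ⟨i', h'⟩ | ⟨j', h'⟩
    · exact (sym2_xa_xa h').1
    · exact absurd h' sym2_xa_ne_xb
    · exact absurd h'.symm sym2_xa_ne_xb
    · exact (sym2_xb_xb h').1
  calc L * hstar = ∑ _k : Fin L, hstar := by
        rw [Finset.sum_const, Finset.card_univ, Fintype.card_fin, smul_eq_mul]
    _ ≤ ∑ k : Fin L, (xEdges E k).card := Finset.sum_le_sum fun k _ => hcard k
    _ = (Finset.univ.biUnion (xEdges E)).card := (Finset.card_biUnion hdisj).symm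
    _ ≤ E.card := Finset.card_le_card (by
        intro e he
        obtain ⟨k, -, hk⟩ := Finset.mem_biUnion.mp he
        exact (mem_xEdges.mp hk).1)


end Aux
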